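/- Let R > 0 and N ∈ ℕ. Let X be a metric space such that every closed ball of radius R in X contains at most N points. Then there is a decomposition X = X₁ ∪ ⋯ ∪ X_N into N subsets each of which is strictly R-separated. -/

import Mathlib

open Set

/-- Greedy coloring of a finite set in the metric space. -/
private lemma greedy_color {X : Type*} [MetricSpace X] (R : ℝ) (hR : 0 < R) (N : ℕ)
    (hball : ∀ x : X,
      (Metric.closedBall x R).Finite ∧ (Metric.closedBall x R).ncard ≤ N)
    (S : Set X) (hS : S.Finite) :
    ∃ f : X → ℕ, (∀ x ∈ S, f x < N) ∧
      ∀ x ∈ S, ∀ y ∈ S, x ≠ y → dist x y ≤ R → f x ≠ f y := by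
  classical
  refine Set.Finite.induction_on S hS ⟨fun _ => 0, by simp, by simp⟩ ?_
  intro a S haS hSfin ih
  obtain ⟨f, hlt, hsep⟩ := ih
  -- neighbors of `a` in `S`
  set T : Set X := {y ∈ S | dist a y ≤ R} with hT
  have hTfin : T.Finite := hSfin.subset (fun y hy => hy.1)
  have hTsub : T ⊆ Metric.closedBall a R \ {a} := by
    rintro y ⟨hyS, hyd⟩
    refine ⟨by simpa [Metric.mem_closedBall, dist_comm] using hyd, ?_⟩
    simp only [mem_singleton_iff]
    rintro rfl; exact haS hyS
  have haB : a ∈ Metric.closedBall a R := by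
    simp [Metric.mem_closedBall, le_of_lt hR]
  have hBfin := (hball a).1
  have hBcard := (hball a).2
  have hTcard : T.ncard < N := by
    have h1 : T.ncard ≤ (Metric.closedBall a R \ {a}).ncard :=
      Set.ncard_le_ncard hTsub (hBfin.subset (diff_subset))
    have h2 : (Metric.closedBall a R \ {a}).ncard =
        (Metric.closedBall a R).ncard - 1 :=
      Set.ncard_diff_singleton_of_mem haB
    have h3 : 0 < (Metric.closedBall a R).ncard :=
      (Set.ncard_pos hBfin).2 ⟨a, haB⟩
    omega
  -- the set of colors used by neighbors
  let U : Finset ℕ := (hTfin.image f).toFinset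
  have hUcard : U.card < N := by
    have : U.card = (f '' T).ncard :=
      (Set.ncard_eq_toFinset_card (f '' T) (hTfin.image f)).symm
    calc U.card = (f '' T).ncard := this
      _ ≤ T.ncard := Set.ncard_image_le hTfin
      _ < N := hTcard
  have : (Finset.range N \ U).Nonempty := by
    apply Finset.card_pos.1
    have := Finset.le_card_sdiff U (Finset.range N)
    have hr : (Finset.range N).card = N := Finset.card_range N
    omega
  obtain ⟨c, hc⟩ := this
  have hcN : c < N := Finset.mem_range.1 (Finset.mem_sdiff.1 hc).1
  have hcU : c ∉ U := (Finset.mem_sdiff.1 hc).2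
  refine ⟨Function.update f a c, ?_, ?_⟩
  · intro x hx
    rcases Set.mem_insert_iff.1 hx with rfl | hxS
    · simp [hcN]
    · have hxa : x ≠ a := fun h => haS (h ▸ hxS)
      simpa [Function.update_of_ne hxa] using hlt x hxS
  · intro x hx y hy hxy hdist
    rcases Set.mem_insert_iff.1 hx with rfl | hxS <;>
      rcases Set.mem_insert_iff.1 hy with rfl | hyS
    · exact absurd rfl hxy
    · have hya : y ≠ x := fun h => haS (h ▸ hyS)
      have hyT : y ∈ T := ⟨hyS, hdist⟩
      have : f y ∈ U := by simp [U]; exact ⟨y, hyT, rfl⟩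
      simp only [Function.update_self, Function.update_of_ne hya]
      exact fun h => hcU (h ▸ this)
    · have hxa : x ≠ y := fun h => haS (h ▸ hxS)
      have hxT : x ∈ T := ⟨hxS, by rwa [dist_comm]⟩
      have : f x ∈ U := by simp [U]; exact ⟨x, hxT, rfl⟩
      simp only [Function.update_self, Function.update_of_ne hxa]
      exact fun h => hcU (h ▸ this)
    · have hxa : x ≠ a := fun h => haS (h ▸ hxS)
      have hya : y ≠ a := fun h => haS (h ▸ hyS)
      simpa [Function.update_of_ne hxa, Function.update_of_ne hya] using
        hsep x hxS y hyS hxy hdist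

/-- Let `R > 0` and `N ∈ ℕ`. Let `X` be a metric space in which every closed
ball of radius `R` contains at most `N` points. Then `X` decomposes as a union
`X = X₁ ∪ ⋯ ∪ X_N` of `N` strictly `R`-separated subsets. -/
theorem stmt_6 {X : Type*} [MetricSpace X] (R : ℝ) (hR : 0 < R) (N : ℕ)
    (hball : ∀ x : X,
      (Metric.closedBall x R).Finite ∧ (Metric.closedBall x R).ncard ≤ N) :
    ∃ Xs : Fin N → Set X, (⋃ i, Xs i) = Set.univ ∧
      ∀ i, ∀ x ∈ Xs i, ∀ y ∈ Xs i, x ≠ y → R < dist x y := by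
  classical
  -- the "proximity" graph
  let G : SimpleGraph X :=
    { Adj := fun x y => x ≠ y ∧ dist x y ≤ R
      symm := by constructor; intro x y ⟨h1, h2⟩; exact ⟨h1.symm, by rwa [dist_comm]⟩
      loopless := by constructor; intro x ⟨h1, _⟩; exact h1 rfl }
  -- every finite subgraph has a homomorphism to the complete graph on `Fin N`
  have hfin : ∀ G' : G.Subgraph, G'.verts.Finite → G'.coe →g (⊤ : SimpleGraph (Fin N)) := by
    intro G' hG'
    have hne : Nonempty (G'.coe →g (⊤ : SimpleGraph (Fin N))) := by
      obtain ⟨f, hlt, hsep⟩ := greedy_color R hR N hball G'.verts hG'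
      refine ⟨⟨fun v => ⟨f v.1, hlt v.1 v.2⟩, ?_⟩⟩
      rintro ⟨u, hu⟩ ⟨v, hv⟩ hadj
      have hG : G.Adj u v := G'.adj_sub hadj
      have := hsep u hu v hv hG.1 hG.2
      simp only [SimpleGraph.top_adj]
      intro h
      exact this (congrArg Fin.val h)
    exact hne.some
  obtain ⟨g⟩ := SimpleGraph.nonempty_hom_of_forall_finite_subgraph_hom hfin
  refine ⟨fun i => {x | g x = i}, ?_, ?_⟩
  · ext x; simp only [Set.mem_iUnion, Set.mem_setOf_eq, Set.mem_univ, iff_true]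
    exact ⟨g x, rfl⟩
  · intro i x hx y hy hxy
    by_contra hle
    push_neg at hle
    have hadj : G.Adj x y := ⟨hxy, hle⟩
    have := g.map_rel hadj
    rw [SimpleGraph.top_adj] at this
    exact this (hx.trans hy.symm)
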